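/- arXiv:2003.00030 — 2 statements merged into one kernel-verified Lean document; each statement's English description precedes it below -/
import Mathlib

section
/- Let f : X → ℝ^d be bounded with sup_x ‖f(x)‖_p ≤ ‖f‖_{p,∞} for some 1 ≤ p ≤ ∞. Let P^π and P̂^π be two Markov transition kernels, and let η_ρ(·;P^π), η_ρ(·;P̂^π) be the corresponding discounted future-state distributions starting from ρ. Then ‖E_{X∼η_ρ(·;P^π)}[f(X)] − E_{X∼η_ρ(·;P̂^π)}[f(X)]‖_p ≤ (γ/(1−γ)) · ‖f‖_{p,∞} · sup_x ‖P^π(·|x) − P̂^π(·|x)‖_TV. -/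
open MeasureTheory ProbabilityTheory
open scoped NNReal ENNReal

/-- `k`-fold composition of a Markov kernel, `(P^π)^0 = id`. -/
noncomputable def kernelPow {X : Type*} [MeasurableSpace X] (P : Kernel X X) : ℕ → Kernel X X
  | 0 => Kernel.id
  | k + 1 => P ∘ₖ kernelPow P k

/-- The discounted future-state distribution `η_ρ(·;P) = (1−γ) ∑_{k≥0} γ^k (ρ P^k)`. -/
noncomputable def discountedDist {X : Type*} [MeasurableSpace X] (γ : ℝ≥0)
    (ρ : Measure X) (P : Kernel X X) : Measure X :=
  ((1 : ℝ≥0) - γ) • Measure.sum (fun k : ℕ => (γ ^ k : ℝ≥0) • ρ.bind (fun x => kernelPow P k x))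

/-- Total variation distance `‖P − Q‖_TV = 2 sup_A |P(A) − Q(A)|`. -/
noncomputable def tvDist {X : Type*} [MeasurableSpace X] (P Q : Measure X) : ℝ :=
  2 * ⨆ A : {A : Set X // MeasurableSet A}, |(P A.1).toReal - (Q A.1).toReal|

section Aux

variable {X : Type*} [MeasurableSpace X]

instance kernelPow_isMarkov (P : Kernel X X) [IsMarkovKernel P] (k : ℕ) :
    IsMarkovKernel (kernelPow P k) := by
  induction k with
  | zero => rw [kernelPow]; infer_instance
  | succ k ih => rw [kernelPow]; infer_instance

lemma isProbabilityMeasure_bind (ρ : Measure X) [IsProbabilityMeasure ρ]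
    (κ : Kernel X X) [IsMarkovKernel κ] : IsProbabilityMeasure (ρ.bind ⇑κ) := by
  constructor
  rw [Measure.bind_apply MeasurableSet.univ κ.measurable.aemeasurable]
  simp

lemma integrable_of_bdd {E : Type*} [NormedAddCommGroup E] (μ : Measure X) [IsFiniteMeasure μ]
    {g : X → E} (hg : AEStronglyMeasurable g μ) {C : ℝ} (hC : ∀ x, ‖g x‖ ≤ C) :
    Integrable g μ :=
  (integrable_const C).mono' hg (Filter.Eventually.of_forall hC)

lemma bind_kernel_eq_map (μ : Measure X) [SFinite μ] (κ : Kernel X X) [IsSFiniteKernel κ] :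
    μ.bind ⇑κ = (μ ⊗ₘ κ).map Prod.snd := by
  ext s hs
  rw [Measure.bind_apply hs κ.measurable.aemeasurable, Measure.map_apply measurable_snd hs,
    Measure.compProd_apply (measurable_snd hs)]
  rfl

lemma integral_bind_kernel {E : Type*} [NormedAddCommGroup E] [NormedSpace ℝ E]
    (μ : Measure X) [IsProbabilityMeasure μ] (κ : Kernel X X) [IsMarkovKernel κ]
    {g : X → E} (hg : StronglyMeasurable g) {C : ℝ} (hC : ∀ x, ‖g x‖ ≤ C) :
    ∫ x, g x ∂(μ.bind ⇑κ) = ∫ a, ∫ b, g b ∂(κ a) ∂μ := by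
  have h1 : StronglyMeasurable fun p : X × X => g p.2 := hg.comp_measurable measurable_snd
  have hint : Integrable (fun p : X × X => g p.2) (μ ⊗ₘ κ) :=
    integrable_of_bdd _ h1.aestronglyMeasurable (fun p => hC p.2)
  rw [bind_kernel_eq_map, integral_map measurable_snd.aemeasurable hg.aestronglyMeasurable,
    Measure.integral_compProd hint]

lemma le_tvDist (μ ν : Measure X) [IsProbabilityMeasure μ] [IsProbabilityMeasure ν]
    {s : Set X} (hs : MeasurableSet s) :
    2 * ((μ s).toReal - (ν s).toReal) ≤ tvDist μ ν := by
  have hb : BddAbove (Set.range fun A : {A : Set X // MeasurableSet A} =>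
      |(μ A.1).toReal - (ν A.1).toReal|) := by
    refine ⟨2, ?_⟩
    rintro r ⟨A, rfl⟩
    have h1 : (μ A.1).toReal ≤ 1 := by
      simpa using ENNReal.toReal_mono ENNReal.one_ne_top prob_le_one
    have h2 : (ν A.1).toReal ≤ 1 := by
      simpa using ENNReal.toReal_mono ENNReal.one_ne_top prob_le_one
    have h3 : (0:ℝ) ≤ (μ A.1).toReal := ENNReal.toReal_nonneg
    have h4 : (0:ℝ) ≤ (ν A.1).toReal := ENNReal.toReal_nonneg
    rw [abs_le]; constructor <;> linarith
  have h := le_ciSup hb (⟨s, hs⟩ : {A : Set X // MeasurableSet A})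
  have h2 := le_abs_self ((μ s).toReal - (ν s).toReal)
  unfold tvDist
  linarith

lemma tvDist_nonneg (μ ν : Measure X) [IsProbabilityMeasure μ] [IsProbabilityMeasure ν] :
    0 ≤ tvDist μ ν := by
  have := le_tvDist μ ν MeasurableSet.empty
  simpa using this

lemma norm_integral_sub_integral_le {E : Type*} [NormedAddCommGroup E] [NormedSpace ℝ E]
    (μ ν : Measure X) [IsProbabilityMeasure μ] [IsProbabilityMeasure ν]
    {g : X → E} (hg : StronglyMeasurable g) {C : ℝ} (hC : ∀ x, ‖g x‖ ≤ C) :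
    ‖∫ x, g x ∂μ - ∫ x, g x ∂ν‖ ≤ C * tvDist μ ν := by
  obtain ⟨s, hs, h₁, h₂⟩ := hahn_decomposition (μ := μ) (ν := ν)
  have hle1 : ν.restrict s ≤ μ.restrict s := by
    refine Measure.le_iff.2 fun t ht => ?_
    rw [Measure.restrict_apply ht, Measure.restrict_apply ht]
    exact h₁ _ (ht.inter hs) Set.inter_subset_right
  have hle2 : μ.restrict sᶜ ≤ ν.restrict sᶜ := by
    refine Measure.le_iff.2 fun t ht => ?_
    rw [Measure.restrict_apply ht, Measure.restrict_apply ht]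
    exact h₂ _ (ht.inter hs.compl) Set.inter_subset_right
  set κ₁ := μ.restrict s - ν.restrict s with hκ₁
  set κ₂ := ν.restrict sᶜ - μ.restrict sᶜ with hκ₂
  have hκ₁le : κ₁ ≤ μ.restrict s := Measure.sub_le
  have hκ₂le : κ₂ ≤ ν.restrict sᶜ := Measure.sub_le
  haveI : IsFiniteMeasure κ₁ := isFiniteMeasure_of_le _ hκ₁le
  haveI : IsFiniteMeasure κ₂ := isFiniteMeasure_of_le _ hκ₂le
  have hadd1 : κ₁ + ν.restrict s = μ.restrict s := Measure.sub_add_cancel_of_le hle1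
  have hadd2 : κ₂ + μ.restrict sᶜ = ν.restrict sᶜ := Measure.sub_add_cancel_of_le hle2
  have hint : ∀ (m : Measure X) [IsFiniteMeasure m], Integrable g m := fun m _ =>
    integrable_of_bdd m hg.aestronglyMeasurable hC
  have e1 : ∫ x, g x ∂μ = ∫ x, g x ∂κ₁ + ∫ x, g x ∂(ν.restrict s) + ∫ x, g x ∂(μ.restrict sᶜ) := by
    rw [← integral_add_compl hs (hint μ)]
    have : ∫ x in s, g x ∂μ = ∫ x, g x ∂(κ₁ + ν.restrict s) := by rw [hadd1]
    rw [this, integral_add_measure (hint _) (hint _)]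
  have e2 : ∫ x, g x ∂ν = ∫ x, g x ∂(ν.restrict s) + (∫ x, g x ∂κ₂ + ∫ x, g x ∂(μ.restrict sᶜ)) := by
    rw [← integral_add_compl hs (hint ν)]
    have : ∫ x in sᶜ, g x ∂ν = ∫ x, g x ∂(κ₂ + μ.restrict sᶜ) := by rw [hadd2]
    rw [this, integral_add_measure (hint _) (hint _)]
  have e3 : ∫ x, g x ∂μ - ∫ x, g x ∂ν = ∫ x, g x ∂κ₁ - ∫ x, g x ∂κ₂ := by
    rw [e1, e2]; abel
  have hμs : μ s ≠ ⊤ := measure_ne_top _ _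
  have hm1 : (κ₁ Set.univ).toReal = (μ s).toReal - (ν s).toReal := by
    rw [hκ₁, Measure.sub_apply MeasurableSet.univ hle1, Measure.restrict_apply_univ,
      Measure.restrict_apply_univ, ENNReal.toReal_sub_of_le (h₁ s hs le_rfl) hμs]
  have hm2 : (κ₂ Set.univ).toReal = (ν sᶜ).toReal - (μ sᶜ).toReal := by
    rw [hκ₂, Measure.sub_apply MeasurableSet.univ hle2, Measure.restrict_apply_univ,
      Measure.restrict_apply_univ,
      ENNReal.toReal_sub_of_le (h₂ sᶜ hs.compl le_rfl) (measure_ne_top _ _)]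
  have hm2' : (κ₂ Set.univ).toReal = (μ s).toReal - (ν s).toReal := by
    have hμc : (μ sᶜ).toReal = 1 - (μ s).toReal := by
      rw [prob_compl_eq_one_sub hs, ENNReal.toReal_sub_of_le prob_le_one ENNReal.one_ne_top,
        ENNReal.toReal_one]
    have hνc : (ν sᶜ).toReal = 1 - (ν s).toReal := by
      rw [prob_compl_eq_one_sub hs, ENNReal.toReal_sub_of_le prob_le_one ENNReal.one_ne_top,
        ENNReal.toReal_one]
    rw [hm2, hμc, hνc]; ring
  have hne : Nonempty X := by
    by_contra h
    rw [not_nonempty_iff] at h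
    have h1 : μ Set.univ = 1 := measure_univ
    rw [Set.univ_eq_empty_iff.mpr h, measure_empty] at h1
    exact zero_ne_one h1
  have hC0 : 0 ≤ C := le_trans (norm_nonneg _) (hC (Classical.choice hne))
  have hb1 : ‖∫ x, g x ∂κ₁‖ ≤ C * (κ₁ Set.univ).toReal :=
    norm_integral_le_of_norm_le_const (Filter.Eventually.of_forall hC)
  have hb2 : ‖∫ x, g x ∂κ₂‖ ≤ C * (κ₂ Set.univ).toReal :=
    norm_integral_le_of_norm_le_const (Filter.Eventually.of_forall hC)
  have htv := le_tvDist μ ν hs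
  calc ‖∫ x, g x ∂μ - ∫ x, g x ∂ν‖ = ‖∫ x, g x ∂κ₁ - ∫ x, g x ∂κ₂‖ := by rw [e3]
    _ ≤ ‖∫ x, g x ∂κ₁‖ + ‖∫ x, g x ∂κ₂‖ := norm_sub_le _ _
    _ ≤ C * (κ₁ Set.univ).toReal + C * (κ₂ Set.univ).toReal := add_le_add hb1 hb2
    _ = C * (2 * ((μ s).toReal - (ν s).toReal)) := by rw [hm1, hm2']; ring
    _ ≤ C * tvDist μ ν := mul_le_mul_of_nonneg_left htv hC0

lemma step_bound {E : Type*} [NormedAddCommGroup E] [NormedSpace ℝ E]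
    (P Phat : Kernel X X) [IsMarkovKernel P] [IsMarkovKernel Phat]
    (ρ : Measure X) [IsProbabilityMeasure ρ] {C ε : ℝ} (hC0 : 0 ≤ C)
    (hε : ∀ x, tvDist (P x) (Phat x) ≤ ε) :
    ∀ (k : ℕ) (g : X → E), StronglyMeasurable g → (∀ x, ‖g x‖ ≤ C) →
      ‖∫ x, g x ∂(ρ.bind ⇑(kernelPow P k)) - ∫ x, g x ∂(ρ.bind ⇑(kernelPow Phat k))‖
        ≤ k * (C * ε) := by
  intro k
  induction k with
  | zero =>
    intro g hg hgC
    have h0 : ∀ (Q : Kernel X X), ρ.bind ⇑(kernelPow Q 0) = ρ := by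
      intro Q
      show ρ.bind ⇑(Kernel.id : Kernel X X) = ρ
      have : ⇑(Kernel.id : Kernel X X) = Measure.dirac := by
        funext a; exact Kernel.id_apply a
      rw [this, Measure.bind_dirac]
    rw [h0 P, h0 Phat]
    simp
  | succ k ih =>
    intro g hg hgC
    haveI h1 : IsProbabilityMeasure (ρ.bind ⇑(kernelPow P k)) :=
      isProbabilityMeasure_bind ρ _
    haveI h2 : IsProbabilityMeasure (ρ.bind ⇑(kernelPow Phat k)) :=
      isProbabilityMeasure_bind ρ _
    have hbb : ∀ (Q : Kernel X X) [IsMarkovKernel Q],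
        ρ.bind ⇑(kernelPow Q (k+1)) = (ρ.bind ⇑(kernelPow Q k)).bind ⇑Q := by
      intro Q _
      have hc : ⇑(kernelPow Q (k+1)) = fun a => ((kernelPow Q k) a).bind ⇑Q := by
        funext a
        show (Q ∘ₖ kernelPow Q k) a = _
        exact Kernel.comp_apply _ _ a
      rw [hc, ← Measure.bind_bind (kernelPow Q k).measurable.aemeasurable Q.measurable.aemeasurable]
    set gP : X → E := fun a => ∫ b, g b ∂(P a) with hgP
    set gPhat : X → E := fun a => ∫ b, g b ∂(Phat a) with hgPhat
    have hgPm : StronglyMeasurable gP :=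
      (hg.comp_measurable measurable_snd).integral_kernel_prod_right' (κ := P)
    have hgPhatm : StronglyMeasurable gPhat :=
      (hg.comp_measurable measurable_snd).integral_kernel_prod_right' (κ := Phat)
    have hgPC : ∀ a, ‖gP a‖ ≤ C := by
      intro a
      have := norm_integral_le_of_norm_le_const (μ := P a) (f := g)
        (Filter.Eventually.of_forall hgC)
      simpa using this
    have hgPhatC : ∀ a, ‖gPhat a‖ ≤ C := by
      intro a
      have := norm_integral_le_of_norm_le_const (μ := Phat a) (f := g)
        (Filter.Eventually.of_forall hgC)
      simpa using this
    have e1 : ∫ x, g x ∂(ρ.bind ⇑(kernelPow P (k+1))) = ∫ a, gP a ∂(ρ.bind ⇑(kernelPow P k)) := by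
      rw [hbb P, integral_bind_kernel _ _ hg hgC]
    have e2 : ∫ x, g x ∂(ρ.bind ⇑(kernelPow Phat (k+1)))
        = ∫ a, gPhat a ∂(ρ.bind ⇑(kernelPow Phat k)) := by
      rw [hbb Phat, integral_bind_kernel _ _ hg hgC]
    have hdiff : ∀ a, ‖gP a - gPhat a‖ ≤ C * ε := by
      intro a
      calc ‖gP a - gPhat a‖ ≤ C * tvDist (P a) (Phat a) :=
            norm_integral_sub_integral_le _ _ hg hgC
        _ ≤ C * ε := mul_le_mul_of_nonneg_left (hε a) hC0
    have hIH := ih gP hgPm hgPC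
    have hint1 : Integrable gP (ρ.bind ⇑(kernelPow Phat k)) :=
      integrable_of_bdd _ hgPm.aestronglyMeasurable hgPC
    have hint2 : Integrable gPhat (ρ.bind ⇑(kernelPow Phat k)) :=
      integrable_of_bdd _ hgPhatm.aestronglyMeasurable hgPhatC
    have hsecond : ‖∫ a, gP a ∂(ρ.bind ⇑(kernelPow Phat k))
        - ∫ a, gPhat a ∂(ρ.bind ⇑(kernelPow Phat k))‖ ≤ C * ε := by
      rw [← integral_sub hint1 hint2]
      have := norm_integral_le_of_norm_le_const (μ := ρ.bind ⇑(kernelPow Phat k))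
        (f := fun a => gP a - gPhat a) (Filter.Eventually.of_forall hdiff)
      simpa using this
    calc ‖∫ x, g x ∂(ρ.bind ⇑(kernelPow P (k+1))) - ∫ x, g x ∂(ρ.bind ⇑(kernelPow Phat (k+1)))‖
        = ‖(∫ a, gP a ∂(ρ.bind ⇑(kernelPow P k)) - ∫ a, gP a ∂(ρ.bind ⇑(kernelPow Phat k)))
            + (∫ a, gP a ∂(ρ.bind ⇑(kernelPow Phat k))
              - ∫ a, gPhat a ∂(ρ.bind ⇑(kernelPow Phat k)))‖ := by
          rw [e1, e2]; congr 1; abel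
      _ ≤ ‖∫ a, gP a ∂(ρ.bind ⇑(kernelPow P k)) - ∫ a, gP a ∂(ρ.bind ⇑(kernelPow Phat k))‖
            + ‖∫ a, gP a ∂(ρ.bind ⇑(kernelPow Phat k))
              - ∫ a, gPhat a ∂(ρ.bind ⇑(kernelPow Phat k))‖ := norm_add_le _ _
      _ ≤ k * (C * ε) + C * ε := add_le_add hIH hsecond
      _ = (k + 1 : ℕ) * (C * ε) := by push_cast; ring

end Aux

/-- **Perturbation of the discounted future-state distribution (sup-norm version).**
For bounded `f : X → ℝ^d` (with `ℓ_p` norm, `1 ≤ p ≤ ∞`),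
`‖E_{η_ρ(·;P)}[f] − E_{η_ρ(·;P̂)}[f]‖_p ≤ γ/(1−γ) · ‖f‖_{p,∞} · sup_x ‖P(·|x) − P̂(·|x)‖_TV`. -/
theorem discountedDist_expectation_perturbation
    {X : Type*} [MeasurableSpace X] (γ : ℝ≥0) (hγ : γ < 1)
    (ρ : Measure X) [IsProbabilityMeasure ρ]
    (P Phat : Kernel X X) [IsMarkovKernel P] [IsMarkovKernel Phat]
    (d : ℕ) (p : ℝ≥0∞) [Fact (1 ≤ p)]
    (f : X → PiLp p (fun _ : Fin d => ℝ))
    (C : ℝ) (hC : ∀ x, ‖f x‖ ≤ C)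
    (hf₁ : Integrable f (discountedDist γ ρ P))
    (hf₂ : Integrable f (discountedDist γ ρ Phat))
    (ε : ℝ) (hε : ∀ x, tvDist (P x) (Phat x) ≤ ε) :
    ‖∫ x, f x ∂(discountedDist γ ρ P) - ∫ x, f x ∂(discountedDist γ ρ Phat)‖ ≤
      (γ : ℝ) / (1 - γ) * C * ε := by
  classical
  have hne : Nonempty X := by
    by_contra h
    rw [not_nonempty_iff] at h
    have h1 : ρ Set.univ = 1 := measure_univ
    rw [Set.univ_eq_empty_iff.mpr h, measure_empty] at h1
    exact zero_ne_one h1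
  obtain ⟨x₀⟩ := hne
  have hC0 : 0 ≤ C := le_trans (norm_nonneg _) (hC x₀)
  have hε0 : 0 ≤ ε := le_trans (tvDist_nonneg (P x₀) (Phat x₀)) (hε x₀)
  -- measurable bounded modification of `f`
  have hm : AEStronglyMeasurable f (discountedDist γ ρ P + discountedDist γ ρ Phat) :=
    aestronglyMeasurable_add_measure_iff.2 ⟨hf₁.1, hf₂.1⟩
  obtain ⟨g₀, hg₀, hfg₀⟩ := hm
  set g : X → PiLp p (fun _ : Fin d => ℝ) := fun x => if ‖g₀ x‖ ≤ C then g₀ x else 0 with hgdef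
  have hset : MeasurableSet {x | ‖g₀ x‖ ≤ C} :=
    measurableSet_le hg₀.norm.measurable measurable_const
  have hg : StronglyMeasurable g := StronglyMeasurable.ite hset hg₀ stronglyMeasurable_const
  have hgC : ∀ x, ‖g x‖ ≤ C := by
    intro x
    by_cases h : ‖g₀ x‖ ≤ C
    · simpa [hgdef, h] using h
    · simp [hgdef, h, hC0]
  have hfg : f =ᵐ[discountedDist γ ρ P + discountedDist γ ρ Phat] g := by
    filter_upwards [hfg₀] with x hx
    have hb : ‖g₀ x‖ ≤ C := by rw [← hx]; exact hC x
    rw [hgdef]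
    simp only [if_pos hb]
    exact hx
  have hfg1 : f =ᵐ[discountedDist γ ρ P] g :=
    hfg.filter_mono (ae_mono (Measure.le_add_right le_rfl))
  have hfg2 : f =ᵐ[discountedDist γ ρ Phat] g :=
    hfg.filter_mono (ae_mono (Measure.le_add_left le_rfl))
  rw [integral_congr_ae hfg1, integral_congr_ae hfg2]
  have hg1 : Integrable g (discountedDist γ ρ P) := hf₁.congr hfg1
  have hg2 : Integrable g (discountedDist γ ρ Phat) := hf₂.congr hfg2
  -- expand the discounted distribution integrals
  have hγ1 : ((1:ℝ≥0) - γ) ≠ 0 := (tsub_pos_of_lt hγ).ne'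
  have key : ∀ (Q : Kernel X X) [IsMarkovKernel Q],
      Integrable g (discountedDist γ ρ Q) →
      ∫ x, g x ∂(discountedDist γ ρ Q)
        = (((1:ℝ≥0) - γ : ℝ≥0) : ℝ) •
          ∑' k : ℕ, ((γ:ℝ)^k) • ∫ x, g x ∂(ρ.bind ⇑(kernelPow Q k)) := by
    intro Q _ hQint
    have hsmul : ((((1:ℝ≥0) - γ : ℝ≥0)) • Measure.sum
        (fun k : ℕ => (γ ^ k : ℝ≥0) • ρ.bind (fun x => kernelPow Q k x)) : Measure X)
        = ((((1:ℝ≥0) - γ : ℝ≥0)) : ℝ≥0∞) • Measure.sum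
          (fun k : ℕ => (γ ^ k : ℝ≥0) • ρ.bind (fun x => kernelPow Q k x)) := rfl
    have hintsum : Integrable g
        (Measure.sum fun k : ℕ => (γ^k : ℝ≥0) • ρ.bind (fun x => kernelPow Q k x)) := by
      rw [discountedDist, hsmul] at hQint
      exact (integrable_smul_measure (by exact_mod_cast hγ1) ENNReal.coe_ne_top).1 hQint
    rw [discountedDist, integral_smul_nnreal_measure, integral_sum_measure hintsum,
      NNReal.smul_def]
    congr 1
    refine tsum_congr fun k => ?_
    rw [integral_smul_nnreal_measure, NNReal.smul_def, NNReal.coe_pow]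
  rw [key P hg1, key Phat hg2]
  -- summability and termwise bounds
  haveI hpk1 : ∀ k : ℕ, IsProbabilityMeasure (ρ.bind ⇑(kernelPow P k)) :=
    fun k => isProbabilityMeasure_bind ρ _
  haveI hpk2 : ∀ k : ℕ, IsProbabilityMeasure (ρ.bind ⇑(kernelPow Phat k)) :=
    fun k => isProbabilityMeasure_bind ρ _
  set T : ℕ → PiLp p (fun _ : Fin d => ℝ) :=
    fun k => ∫ x, g x ∂(ρ.bind ⇑(kernelPow P k)) with hT
  set S : ℕ → PiLp p (fun _ : Fin d => ℝ) :=
    fun k => ∫ x, g x ∂(ρ.bind ⇑(kernelPow Phat k)) with hS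
  have hγ0 : (0:ℝ) ≤ (γ:ℝ) := γ.coe_nonneg
  have hγlt : (γ:ℝ) < 1 := by exact_mod_cast hγ
  have hTle : ∀ k, ‖T k‖ ≤ C := by
    intro k
    haveI := hpk1 k
    have := norm_integral_le_of_norm_le_const (μ := ρ.bind ⇑(kernelPow P k)) (f := g)
      (Filter.Eventually.of_forall hgC)
    simpa using this
  have hSle : ∀ k, ‖S k‖ ≤ C := by
    intro k
    haveI := hpk2 k
    have := norm_integral_le_of_norm_le_const (μ := ρ.bind ⇑(kernelPow Phat k)) (f := g)
      (Filter.Eventually.of_forall hgC)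
    simpa using this
  have hgeo : Summable fun k : ℕ => C * (γ:ℝ)^k :=
    (summable_geometric_of_lt_one hγ0 hγlt).mul_left C
  have hsum1 : Summable fun k : ℕ => ((γ:ℝ)^k) • T k := by
    refine Summable.of_norm_bounded hgeo fun k => ?_
    rw [norm_smul, Real.norm_eq_abs, abs_of_nonneg (pow_nonneg hγ0 k)]
    calc (γ:ℝ)^k * ‖T k‖ ≤ (γ:ℝ)^k * C :=
          mul_le_mul_of_nonneg_left (hTle k) (pow_nonneg hγ0 k)
      _ = C * (γ:ℝ)^k := mul_comm _ _
  have hsum2 : Summable fun k : ℕ => ((γ:ℝ)^k) • S k := by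
    refine Summable.of_norm_bounded hgeo fun k => ?_
    rw [norm_smul, Real.norm_eq_abs, abs_of_nonneg (pow_nonneg hγ0 k)]
    calc (γ:ℝ)^k * ‖S k‖ ≤ (γ:ℝ)^k * C :=
          mul_le_mul_of_nonneg_left (hSle k) (pow_nonneg hγ0 k)
      _ = C * (γ:ℝ)^k := mul_comm _ _
  have hstep := step_bound (E := PiLp p (fun _ : Fin d => ℝ)) P Phat ρ hC0 hε
  have hbk : ∀ k : ℕ, ‖((γ:ℝ)^k) • T k - ((γ:ℝ)^k) • S k‖ ≤ (C*ε) * ((k:ℝ) * (γ:ℝ)^k) := by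
    intro k
    rw [← smul_sub, norm_smul, Real.norm_eq_abs, abs_of_nonneg (pow_nonneg hγ0 k)]
    calc (γ:ℝ)^k * ‖T k - S k‖ ≤ (γ:ℝ)^k * ((k:ℝ) * (C*ε)) :=
          mul_le_mul_of_nonneg_left (hstep k g hg hgC) (pow_nonneg hγ0 k)
      _ = (C*ε) * ((k:ℝ) * (γ:ℝ)^k) := by ring
  have hsummul : Summable fun k : ℕ => (C*ε) * ((k:ℝ) * (γ:ℝ)^k) := by
    have h := summable_pow_mul_geometric_of_norm_lt_one (R := ℝ) 1
      (by rwa [Real.norm_eq_abs, abs_of_nonneg hγ0])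
    have h2 : Summable fun k : ℕ => (k:ℝ) * (γ:ℝ)^k := by
      refine h.congr fun k => ?_
      rw [pow_one]
    exact h2.mul_left (C*ε)
  have hnormsum : Summable fun k : ℕ => ‖((γ:ℝ)^k) • T k - ((γ:ℝ)^k) • S k‖ :=
    Summable.of_nonneg_of_le (fun k => norm_nonneg _) hbk hsummul
  have hc₁0 : (0:ℝ) ≤ (((1:ℝ≥0) - γ : ℝ≥0) : ℝ) := NNReal.coe_nonneg _
  have hcoe : (((1:ℝ≥0) - γ : ℝ≥0) : ℝ) = 1 - (γ:ℝ) := by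
    rw [NNReal.coe_sub hγ.le, NNReal.coe_one]
  have h1γ : (1:ℝ) - (γ:ℝ) ≠ 0 := by linarith
  calc ‖(((1:ℝ≥0) - γ : ℝ≥0) : ℝ) • ∑' k : ℕ, ((γ:ℝ)^k) • T k
        - (((1:ℝ≥0) - γ : ℝ≥0) : ℝ) • ∑' k : ℕ, ((γ:ℝ)^k) • S k‖
      = (((1:ℝ≥0) - γ : ℝ≥0) : ℝ) *
          ‖∑' k : ℕ, (((γ:ℝ)^k) • T k - ((γ:ℝ)^k) • S k)‖ := by
        rw [← smul_sub, ← Summable.tsum_sub hsum1 hsum2, norm_smul, Real.norm_eq_abs,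
          abs_of_nonneg hc₁0]
    _ ≤ (((1:ℝ≥0) - γ : ℝ≥0) : ℝ) *
          ∑' k : ℕ, ‖((γ:ℝ)^k) • T k - ((γ:ℝ)^k) • S k‖ :=
        mul_le_mul_of_nonneg_left (norm_tsum_le_tsum_norm hnormsum) hc₁0
    _ ≤ (((1:ℝ≥0) - γ : ℝ≥0) : ℝ) * ∑' k : ℕ, (C*ε) * ((k:ℝ) * (γ:ℝ)^k) :=
        mul_le_mul_of_nonneg_left (Summable.tsum_le_tsum hbk hnormsum hsummul) hc₁0
    _ = (((1:ℝ≥0) - γ : ℝ≥0) : ℝ) * ((C*ε) * ∑' k : ℕ, (k:ℝ) * (γ:ℝ)^k) := by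
        rw [tsum_mul_left]
    _ = (((1:ℝ≥0) - γ : ℝ≥0) : ℝ) * ((C*ε) * ((γ:ℝ) / (1 - (γ:ℝ))^2)) := by
        rw [tsum_coe_mul_geometric_of_norm_lt_one
          (by rwa [Real.norm_eq_abs, abs_of_nonneg hγ0])]
    _ = (γ : ℝ) / (1 - γ) * C * ε := by
        rw [hcoe]
        field_simp
end

section
/- (Policy gradient error bound) Consider an MDP with discount 0 ≤ γ < 1 and an exponential-family policy π_θ with ℓ₂-bounded features ‖φ(a|x)‖₂ ≤ B₂. Suppose the action-value function Q^{π_θ} (under the true kernel) is bounded by Q_max. Let ∇J and ∇Ĵ be the policy gradients computed with the true discounted future-state distribution η_ρ(·;P^{π_θ}) and the model-induced one η_ρ(·;P̂^{π_θ}), respectively, using the same critic Q^{π_θ}. Then ‖∇J − ∇Ĵ‖₂ ≤ (γ/(1−γ)²)·Q_max·B₂·sup_x ‖P^{π_θ}(·|x) − P̂^{π_θ}(·|x)‖_TV. -/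
open MeasureTheory ProbabilityTheory
open scoped NNReal ENNReal RealInnerProductSpace BigOperators

/-- Exponential-family (softmax) policy `π_θ(a|x) ∝ exp(φ(a|x)ᵀθ)`. -/
noncomputable def softmaxPolicy {X A : Type*} [Fintype A] {d : ℕ}
    (φ : X → A → EuclideanSpace ℝ (Fin d)) (θ : EuclideanSpace ℝ (Fin d))
    (x : X) (a : A) : ℝ :=
  Real.exp ⟪φ x a, θ⟫ / ∑ a' : A, Real.exp ⟪φ x a', θ⟫

/-- The pointwise policy-gradient integrand
`f(x) = E_{A∼π_θ(·|x)}[∇_θ log π_θ(A|x) · Q(x,A)]` for the softmax policy. -/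
noncomputable def pgIntegrand {X A : Type*} [Fintype A] {d : ℕ}
    (φ : X → A → EuclideanSpace ℝ (Fin d)) (θ : EuclideanSpace ℝ (Fin d))
    (Q : X → A → ℝ) (x : X) : EuclideanSpace ℝ (Fin d) :=
  ∑ a : A, softmaxPolicy φ θ x a •
    (Q x a • (φ x a - ∑ a' : A, softmaxPolicy φ θ x a' • φ x a'))

section AuxPG

variable {X : Type*} [MeasurableSpace X]

lemma tv_bdd (P Q : Measure X) [IsProbabilityMeasure P] [IsProbabilityMeasure Q] :
    BddAbove (Set.range fun A : {A : Set X // MeasurableSet A} =>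
      |(P A.1).toReal - (Q A.1).toReal|) := by
  refine ⟨2, ?_⟩
  rintro x ⟨A, rfl⟩
  have h1 : (P A.1).toReal ≤ 1 := by
    simpa using ENNReal.toReal_mono (by simp) (prob_le_one (μ := P) (s := A.1))
  have h2 : (Q A.1).toReal ≤ 1 := by
    simpa using ENNReal.toReal_mono (by simp) (prob_le_one (μ := Q) (s := A.1))
  have h3 : 0 ≤ (P A.1).toReal := ENNReal.toReal_nonneg
  have h4 : 0 ≤ (Q A.1).toReal := ENNReal.toReal_nonneg
  rw [abs_le]; constructor <;> linarith

lemma le_tv_half (P Q : Measure X) [IsProbabilityMeasure P] [IsProbabilityMeasure Q]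
    {A : Set X} (hA : MeasurableSet A) :
    |(P A).toReal - (Q A).toReal| ≤ tvDist P Q / 2 := by
  have := le_ciSup (tv_bdd P Q) ⟨A, hA⟩
  simp only [tvDist]
  linarith

lemma tv_nonneg (P Q : Measure X) [IsProbabilityMeasure P] [IsProbabilityMeasure Q] :
    0 ≤ tvDist P Q := by
  have := le_tv_half P Q MeasurableSet.empty
  simp at this
  linarith

lemma tv_triangle (P R Q : Measure X) [IsProbabilityMeasure P] [IsProbabilityMeasure Q]
    [IsProbabilityMeasure R] : tvDist P Q ≤ tvDist P R + tvDist R Q := by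
  have h : ∀ A : {A : Set X // MeasurableSet A},
      |(P A.1).toReal - (Q A.1).toReal| ≤ (tvDist P R + tvDist R Q) / 2 := by
    intro A
    have h1 := le_tv_half P R A.2
    have h2 := le_tv_half R Q A.2
    have := abs_sub_le ((P A.1).toReal) ((R A.1).toReal) ((Q A.1).toReal)
    linarith
  have := ciSup_le h
  simp only [tvDist] at this ⊢
  linarith

lemma nonempty_of_prob (μ : Measure X) [IsProbabilityMeasure μ] : Nonempty X := by
  by_contra h
  rw [not_nonempty_iff] at h
  have h1 := measure_univ (μ := μ)
  rw [Set.univ_eq_empty_iff.2 h, measure_empty] at h1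
  exact zero_ne_one h1

lemma integral_restrict_sub_le (μ ν : Measure X) [IsProbabilityMeasure μ]
    [IsProbabilityMeasure ν] {g : X → ℝ} (hgi : Integrable g μ) (hgi' : Integrable g ν)
    {M : ℝ} (hg : ∀ x, |g x| ≤ M) {s : Set X} (hs : MeasurableSet s)
    (hle : ν.restrict s ≤ μ.restrict s) :
    ∫ x in s, g x ∂μ - ∫ x in s, g x ∂ν ≤ M * ((μ s).toReal - (ν s).toReal) := by
  set π := μ.restrict s - ν.restrict s with hπ
  have hadd : π + ν.restrict s = μ.restrict s := Measure.sub_add_cancel_of_le hle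
  have hπle : π ≤ μ := le_trans Measure.sub_le (Measure.restrict_le_self)
  have hiπ : Integrable g π := hgi.mono_measure hπle
  have hiν : Integrable g (ν.restrict s) := hgi'.restrict
  have hsplit : ∫ x in s, g x ∂μ = ∫ x, g x ∂π + ∫ x in s, g x ∂ν := by
    rw [← hadd, integral_add_measure hiπ hiν]
  rw [hsplit]
  have hfin : IsFiniteMeasure π := by
    exact isFiniteMeasure_of_le μ hπle
  have hb : ∫ x, g x ∂π ≤ M * (π Set.univ).toReal := by
    have := norm_integral_le_of_norm_le_const (μ := π) (f := g) (C := M)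
      (Filter.Eventually.of_forall (fun x => by simpa using hg x))
    calc ∫ x, g x ∂π ≤ ‖∫ x, g x ∂π‖ := le_abs_self _
      _ ≤ M * (π Set.univ).toReal := this
  have hπuniv : (π Set.univ).toReal = (μ s).toReal - (ν s).toReal := by
    rw [Measure.sub_apply MeasurableSet.univ hle]
    rw [Measure.restrict_apply_univ, Measure.restrict_apply_univ]
    have h1 : ν s ≤ μ s := by
      have := hle s
      rwa [Measure.restrict_apply_self, Measure.restrict_apply_self] at this
    rw [ENNReal.toReal_sub_of_le h1 (measure_ne_top _ _)]
  rw [hπuniv] at hb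
  linarith

lemma integral_sub_le_tv (μ ν : Measure X) [IsProbabilityMeasure μ]
    [IsProbabilityMeasure ν] {g : X → ℝ} (hgi : Integrable g μ) (hgi' : Integrable g ν)
    {M : ℝ} (hg : ∀ x, |g x| ≤ M) :
    ∫ x, g x ∂μ - ∫ x, g x ∂ν ≤ M * tvDist μ ν := by
  obtain ⟨s, hs, h1, h2⟩ := hahn_decomposition (μ := μ) (ν := ν)
  have hles : ν.restrict s ≤ μ.restrict s := by
    refine Measure.le_iff.2 (fun t ht => ?_)
    rw [Measure.restrict_apply' hs, Measure.restrict_apply' hs]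
    exact h1 _ (ht.inter hs) (Set.inter_subset_right)
  have hlesc : μ.restrict sᶜ ≤ ν.restrict sᶜ := by
    refine Measure.le_iff.2 (fun t ht => ?_)
    rw [Measure.restrict_apply' hs.compl, Measure.restrict_apply' hs.compl]
    exact h2 _ (ht.inter hs.compl) (Set.inter_subset_right)
  have hA := integral_restrict_sub_le μ ν hgi hgi' hg hs hles
  have hgneg : ∀ x, |(-g) x| ≤ M := fun x => by simpa using hg x
  have hB := integral_restrict_sub_le ν μ hgi'.neg hgi.neg hgneg hs.compl hlesc
  simp only [Pi.neg_apply, integral_neg] at hB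
  have hμ := integral_add_compl hs hgi
  have hν := integral_add_compl hs hgi'
  have e1 : (μ s).toReal - (ν s).toReal ≤ tvDist μ ν / 2 :=
    le_trans (le_abs_self _) (le_tv_half μ ν hs)
  have e2 : (ν sᶜ).toReal - (μ sᶜ).toReal ≤ tvDist μ ν / 2 := by
    have := le_tv_half μ ν hs.compl
    rw [abs_sub_comm] at this
    exact le_trans (le_abs_self _) this
  have hM : 0 ≤ M := by
    have : Nonempty X := nonempty_of_prob μ
    obtain ⟨x⟩ := this
    exact le_trans (abs_nonneg _) (hg x)
  nlinarith [mul_le_mul_of_nonneg_left e1 hM, mul_le_mul_of_nonneg_left e2 hM]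

lemma norm_integral_sub_le_tv {d : ℕ} (μ ν : Measure X) [IsProbabilityMeasure μ]
    [IsProbabilityMeasure ν] {f : X → EuclideanSpace ℝ (Fin d)}
    (hfi : Integrable f μ) (hfi' : Integrable f ν)
    {M : ℝ} (hM : 0 ≤ M) (hf : ∀ x, ‖f x‖ ≤ M) :
    ‖∫ x, f x ∂μ - ∫ x, f x ∂ν‖ ≤ M * tvDist μ ν := by
  set u := ∫ x, f x ∂μ - ∫ x, f x ∂ν with hu
  rcases eq_or_ne u 0 with h | h
  · rw [h, norm_zero]
    exact mul_nonneg hM (tv_nonneg μ ν)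
  · set e := ‖u‖⁻¹ • u with he
    have hne : ‖u‖ ≠ 0 := norm_ne_zero_iff.2 h
    have hee : ‖e‖ = 1 := by
      rw [he, norm_smul, norm_inv, norm_norm, inv_mul_cancel₀ hne]
    have key : ‖u‖ = ⟪e, u⟫ := by
      rw [he, real_inner_smul_left, real_inner_self_eq_norm_sq]
      field_simp
    have hsplit : ⟪e, u⟫ = ∫ x, ⟪e, f x⟫ ∂μ - ∫ x, ⟪e, f x⟫ ∂ν := by
      rw [hu, inner_sub_right, integral_inner hfi, integral_inner hfi']
    have hgb : ∀ x, |⟪e, f x⟫| ≤ M := by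
      intro x
      calc |⟪e, f x⟫| ≤ ‖e‖ * ‖f x‖ := abs_real_inner_le_norm _ _
        _ = ‖f x‖ := by rw [hee, one_mul]
        _ ≤ M := hf x
    have := integral_sub_le_tv μ ν (hfi.const_inner e) (hfi'.const_inner e) hgb
    rw [key, hsplit]
    exact this

lemma kernelPow_markov (P : Kernel X X) [IsMarkovKernel P] (k : ℕ) :
    IsMarkovKernel (kernelPow P k) := by
  induction k with
  | zero => rw [kernelPow]; infer_instance
  | succ k ih => rw [kernelPow]; exact Kernel.IsMarkovKernel.comp P (kernelPow P k)

lemma bind_kernel_prob (μ : Measure X) [IsProbabilityMeasure μ] (κ : Kernel X X)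
    [IsMarkovKernel κ] : IsProbabilityMeasure (μ.bind (fun x => κ x)) := by
  constructor
  rw [Measure.bind_apply MeasurableSet.univ κ.measurable.aemeasurable]
  simp [measure_univ]

lemma bind_pow_succ (μ : Measure X) (P : Kernel X X) (k : ℕ) :
    μ.bind (fun x => kernelPow P (k + 1) x) =
      (μ.bind (fun x => kernelPow P k x)).bind (fun x => P x) := by
  rw [Measure.bind_bind (kernelPow P k).measurable.aemeasurable P.measurable.aemeasurable]
  congr 1

lemma tv_bind_contract (μ ν : Measure X) [IsProbabilityMeasure μ] [IsProbabilityMeasure ν]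
    (κ : Kernel X X) [IsMarkovKernel κ] :
    tvDist (μ.bind (fun x => κ x)) (ν.bind (fun x => κ x)) ≤ tvDist μ ν := by
  haveI := bind_kernel_prob μ κ
  haveI := bind_kernel_prob ν κ
  have key : ∀ A : Set X, MeasurableSet A →
      |((μ.bind (fun x => κ x)) A).toReal - ((ν.bind (fun x => κ x)) A).toReal| ≤
        tvDist μ ν / 2 := by
    intro A hA
    set g : X → ℝ := fun x => (κ x A).toReal with hgdef
    have hgm : Measurable g := (κ.measurable_coe hA).ennreal_toReal
    have hgb : ∀ x, 0 ≤ g x ∧ g x ≤ 1 := by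
      intro x
      exact ⟨ENNReal.toReal_nonneg, by
        simpa using ENNReal.toReal_mono (by simp) (prob_le_one (μ := κ x) (s := A))⟩
    have hbind : ∀ (ξ : Measure X), ((ξ.bind (fun x => κ x)) A).toReal = ∫ x, g x ∂ξ := by
      intro ξ
      rw [Measure.bind_apply hA κ.measurable.aemeasurable]
      exact (integral_toReal (κ.measurable_coe hA).aemeasurable
        (Filter.Eventually.of_forall (fun x => measure_lt_top _ _))).symm
    have hgi : ∀ (ξ : Measure X) [IsProbabilityMeasure ξ], Integrable g ξ := by
      intro ξ _
      refine (integrable_const (1 : ℝ)).mono' hgm.aestronglyMeasurable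
        (Filter.Eventually.of_forall (fun x => ?_))
      rw [Real.norm_eq_abs, abs_of_nonneg (hgb x).1]
      exact (hgb x).2
    rw [hbind μ, hbind ν]
    have habs : ∀ x, |g x - 1/2| ≤ 1/2 := fun x => by
      rw [abs_le]; constructor
      · linarith [(hgb x).1]
      · linarith [(hgb x).2]
    have h1 := integral_sub_le_tv μ ν (g := fun x => g x - 1/2)
      ((hgi μ).sub (integrable_const _)) ((hgi ν).sub (integrable_const _)) habs
    have h2 := integral_sub_le_tv ν μ (g := fun x => g x - 1/2)
      ((hgi ν).sub (integrable_const _)) ((hgi μ).sub (integrable_const _)) habs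
    rw [tvDist] at h1 h2 ⊢
    have hc : ∀ (ξ : Measure X) [IsProbabilityMeasure ξ],
        ∫ x, (g x - 1/2) ∂ξ = ∫ x, g x ∂ξ - 1/2 := by
      intro ξ _
      rw [integral_sub (hgi ξ) (integrable_const _), integral_const]
      simp
    rw [hc μ, hc ν] at h1 h2
    rw [abs_le]
    have hsymm : (⨆ A : {A : Set X // MeasurableSet A}, |(ν A.1).toReal - (μ A.1).toReal|)
        = ⨆ A : {A : Set X // MeasurableSet A}, |(μ A.1).toReal - (ν A.1).toReal| := by
      congr 1; funext A; rw [abs_sub_comm]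
    rw [hsymm] at h2
    constructor
    · linarith
    · linarith
  have := ciSup_le (fun A : {A : Set X // MeasurableSet A} => key A.1 A.2)
  simp only [tvDist] at this ⊢
  linarith

lemma tv_bind_step (μ : Measure X) [IsProbabilityMeasure μ] (P Phat : Kernel X X)
    [IsMarkovKernel P] [IsMarkovKernel Phat] {ε : ℝ}
    (hε : ∀ x, tvDist (P x) (Phat x) ≤ ε) :
    tvDist (μ.bind (fun x => P x)) (μ.bind (fun x => Phat x)) ≤ ε := by
  haveI := bind_kernel_prob μ P
  haveI := bind_kernel_prob μ Phat
  have key : ∀ A : Set X, MeasurableSet A →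
      |((μ.bind (fun x => P x)) A).toReal - ((μ.bind (fun x => Phat x)) A).toReal| ≤ ε / 2 := by
    intro A hA
    set g : X → ℝ := fun x => (P x A).toReal with hg
    set g' : X → ℝ := fun x => (Phat x A).toReal with hg'
    have hbind : ∀ (κ : Kernel X X) [IsMarkovKernel κ],
        ((μ.bind (fun x => κ x)) A).toReal = ∫ x, (κ x A).toReal ∂μ := by
      intro κ _
      rw [Measure.bind_apply hA κ.measurable.aemeasurable]
      exact (integral_toReal (κ.measurable_coe hA).aemeasurable
        (Filter.Eventually.of_forall (fun x => measure_lt_top _ _))).symm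
    rw [hbind P, hbind Phat]
    have hint : ∀ (κ : Kernel X X) [IsMarkovKernel κ],
        Integrable (fun x => (κ x A).toReal) μ := by
      intro κ _
      refine (integrable_const (1 : ℝ)).mono'
        ((κ.measurable_coe hA).ennreal_toReal).aestronglyMeasurable
        (Filter.Eventually.of_forall (fun x => ?_))
      rw [Real.norm_eq_abs, abs_of_nonneg ENNReal.toReal_nonneg]
      simpa using ENNReal.toReal_mono (by simp) (prob_le_one (μ := κ x) (s := A))
    rw [← integral_sub (hint P) (hint Phat)]
    have hptw : ∀ x, ‖(P x A).toReal - (Phat x A).toReal‖ ≤ ε / 2 := by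
      intro x
      rw [Real.norm_eq_abs]
      exact le_trans (le_tv_half (P x) (Phat x) hA) (by linarith [hε x])
    calc |∫ x, ((P x A).toReal - (Phat x A).toReal) ∂μ|
        ≤ ε / 2 * (μ Set.univ).toReal :=
          norm_integral_le_of_norm_le_const (Filter.Eventually.of_forall hptw)
      _ = ε / 2 := by simp
  have := ciSup_le (fun A : {A : Set X // MeasurableSet A} => key A.1 A.2)
  rw [tvDist]
  linarith

lemma tv_self (μ : Measure X) [IsProbabilityMeasure μ] : tvDist μ μ = 0 := by
  rw [tvDist]
  have : ∀ A : {A : Set X // MeasurableSet A}, |(μ A.1).toReal - (μ A.1).toReal| = 0 := by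
    intro A; simp
  rw [show (⨆ A : {A : Set X // MeasurableSet A}, |(μ A.1).toReal - (μ A.1).toReal|) = 0 by
    simp [this]]
  ring

lemma tv_pow_le (ρ : Measure X) [IsProbabilityMeasure ρ] (P Phat : Kernel X X)
    [IsMarkovKernel P] [IsMarkovKernel Phat] {ε : ℝ}
    (hε : ∀ x, tvDist (P x) (Phat x) ≤ ε) (k : ℕ) :
    tvDist (ρ.bind (fun x => kernelPow P k x)) (ρ.bind (fun x => kernelPow Phat k x)) ≤
      k * ε := by
  induction k with
  | zero =>
      have hid : ∀ (κ : Kernel X X), κ = Kernel.id →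
          ρ.bind (fun x => κ x) = ρ := by
        intro κ hκ
        subst hκ
        simp only [Kernel.id_apply]
        exact Measure.bind_dirac
      rw [hid (kernelPow P 0) rfl, hid (kernelPow Phat 0) rfl, tv_self]
      simp
  | succ k ih =>
      haveI := kernelPow_markov P k
      haveI := kernelPow_markov Phat k
      haveI := bind_kernel_prob ρ (kernelPow P k)
      haveI := bind_kernel_prob ρ (kernelPow Phat k)
      haveI := kernelPow_markov P (k+1)
      haveI := kernelPow_markov Phat (k+1)
      haveI := bind_kernel_prob ρ (kernelPow P (k+1))
      haveI := bind_kernel_prob ρ (kernelPow Phat (k+1))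
      haveI := bind_kernel_prob (ρ.bind (fun x => kernelPow Phat k x)) P
      haveI := bind_kernel_prob (ρ.bind (fun x => kernelPow P k x)) P
      haveI := bind_kernel_prob (ρ.bind (fun x => kernelPow Phat k x)) Phat
      rw [bind_pow_succ, bind_pow_succ]
      have htri := tv_triangle (P := (ρ.bind (fun x => kernelPow P k x)).bind (fun x => P x))
        (R := (ρ.bind (fun x => kernelPow Phat k x)).bind (fun x => P x))
        (Q := (ρ.bind (fun x => kernelPow Phat k x)).bind (fun x => Phat x))
      have h1 := tv_bind_contract (ρ.bind (fun x => kernelPow P k x))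
        (ρ.bind (fun x => kernelPow Phat k x)) P
      have h2 := tv_bind_step (ρ.bind (fun x => kernelPow Phat k x)) P Phat hε
      calc tvDist _ _ ≤ _ + _ := htri
        _ ≤ k * ε + ε := add_le_add (le_trans h1 ih) h2
        _ = (k + 1 : ℕ) * ε := by push_cast; ring

lemma pg_norm_le {Y A : Type*} [Fintype A] [Nonempty A] {d : ℕ}
    (φ : Y → A → EuclideanSpace ℝ (Fin d)) (θ : EuclideanSpace ℝ (Fin d))
    (Q : Y → A → ℝ) {B₂ Qmax : ℝ} (hB : ∀ x a, ‖φ x a‖ ≤ B₂) (hQ : ∀ x a, |Q x a| ≤ Qmax)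
    (x : Y) : ‖pgIntegrand φ θ Q x‖ ≤ Qmax * B₂ := by
  set p : A → ℝ := softmaxPolicy φ θ x with hp
  have hppos : ∀ a, 0 ≤ p a := by
    intro a
    apply div_nonneg (Real.exp_pos _).le
    exact Finset.sum_nonneg (fun a' _ => (Real.exp_pos _).le)
  have hpsum : ∑ a : A, p a = 1 := by
    rw [hp]
    simp only [softmaxPolicy]
    rw [← Finset.sum_div]
    apply div_self
    exact ne_of_gt (Finset.sum_pos (fun a _ => Real.exp_pos _) Finset.univ_nonempty)
  have hQ0 : 0 ≤ Qmax := le_trans (abs_nonneg _) (hQ x (Classical.arbitrary A))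
  have hB0 : 0 ≤ B₂ := le_trans (norm_nonneg _) (hB x (Classical.arbitrary A))
  set c : EuclideanSpace ℝ (Fin d) := ∑ a' : A, p a' • φ x a' with hc
  set f : EuclideanSpace ℝ (Fin d) := pgIntegrand φ θ Q x with hf
  rcases eq_or_ne f 0 with h | h
  · rw [h, norm_zero]; exact mul_nonneg hQ0 hB0
  · set e : EuclideanSpace ℝ (Fin d) := ‖f‖⁻¹ • f with he
    have hne : ‖f‖ ≠ 0 := norm_ne_zero_iff.2 h
    have hee : ‖e‖ = 1 := by rw [he, norm_smul, norm_inv, norm_norm, inv_mul_cancel₀ hne]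
    have key : ‖f‖ = ⟪e, f⟫ := by
      rw [he, real_inner_smul_left, real_inner_self_eq_norm_sq]
      field_simp
    set g : A → ℝ := fun a => ⟪e, φ x a⟫ with hg
    have hgbar : ⟪e, c⟫ = ∑ a : A, p a * g a := by
      rw [hc, inner_sum]
      exact Finset.sum_congr rfl (fun a _ => real_inner_smul_right _ _ _)
    have hexp : ⟪e, f⟫ = ∑ a : A, p a * (Q x a * (g a - ⟪e, c⟫)) := by
      rw [hf, pgIntegrand, inner_sum]
      refine Finset.sum_congr rfl (fun a _ => ?_)
      rw [real_inner_smul_right, real_inner_smul_right, inner_sub_right]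
    -- Cauchy-Schwarz
    set s : ℝ := ⟪e, c⟫
    have hCS : (∑ a : A, p a * (Q x a * (g a - s))) ^ 2 ≤
        (∑ a : A, p a * (Q x a)^2) * (∑ a : A, p a * (g a - s)^2) := by
      have := Finset.sum_mul_sq_le_sq_mul_sq Finset.univ
        (fun a => Real.sqrt (p a) * Q x a) (fun a => Real.sqrt (p a) * (g a - s))
      calc (∑ a : A, p a * (Q x a * (g a - s))) ^ 2
          = (∑ a : A, (Real.sqrt (p a) * Q x a) * (Real.sqrt (p a) * (g a - s))) ^ 2 := by
            congr 1
            refine Finset.sum_congr rfl (fun a _ => ?_)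
            rw [show (Real.sqrt (p a) * Q x a) * (Real.sqrt (p a) * (g a - s))
              = (Real.sqrt (p a) * Real.sqrt (p a)) * (Q x a * (g a - s)) by ring,
              Real.mul_self_sqrt (hppos a)]
        _ ≤ (∑ a : A, (Real.sqrt (p a) * Q x a)^2) * (∑ a : A, (Real.sqrt (p a) * (g a - s))^2) :=
            this
        _ = (∑ a : A, p a * (Q x a)^2) * (∑ a : A, p a * (g a - s)^2) := by
            congr 1 <;> refine Finset.sum_congr rfl (fun a _ => ?_) <;>
              rw [mul_pow, Real.sq_sqrt (hppos a)]
    have hQsum : (∑ a : A, p a * (Q x a)^2) ≤ Qmax^2 := by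
      calc (∑ a : A, p a * (Q x a)^2) ≤ ∑ a : A, p a * Qmax^2 := by
            refine Finset.sum_le_sum (fun a _ => ?_)
            refine mul_le_mul_of_nonneg_left ?_ (hppos a)
            calc (Q x a)^2 = |Q x a|^2 := (sq_abs _).symm
              _ ≤ Qmax^2 := by
                  apply pow_le_pow_left₀ (abs_nonneg _) (hQ x a)
        _ = Qmax^2 := by rw [← Finset.sum_mul, hpsum, one_mul]
    have hvar : (∑ a : A, p a * (g a - s)^2) = (∑ a : A, p a * (g a)^2) - s^2 := by
      have : ∀ a, p a * (g a - s)^2 = p a * (g a)^2 - 2 * s * (p a * g a) + s^2 * p a := by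
        intro a; ring
      rw [Finset.sum_congr rfl (fun a _ => this a)]
      rw [Finset.sum_add_distrib, Finset.sum_sub_distrib, ← Finset.mul_sum, ← Finset.mul_sum,
        ← hgbar, hpsum]
      simp only [s]
      ring
    have hgsum : (∑ a : A, p a * (g a)^2) ≤ B₂^2 := by
      calc (∑ a : A, p a * (g a)^2) ≤ ∑ a : A, p a * B₂^2 := by
            refine Finset.sum_le_sum (fun a _ => ?_)
            refine mul_le_mul_of_nonneg_left ?_ (hppos a)
            calc (g a)^2 = |g a|^2 := (sq_abs _).symm
              _ ≤ B₂^2 := by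
                  apply pow_le_pow_left₀ (abs_nonneg _)
                  calc |g a| ≤ ‖e‖ * ‖φ x a‖ := abs_real_inner_le_norm _ _
                    _ = ‖φ x a‖ := by rw [hee, one_mul]
                    _ ≤ B₂ := hB x a
        _ = B₂^2 := by rw [← Finset.sum_mul, hpsum, one_mul]
    have hvar' : (∑ a : A, p a * (g a - s)^2) ≤ B₂^2 := by
      rw [hvar]; nlinarith [sq_nonneg s]
    have hfinal : ⟪e, f⟫^2 ≤ (Qmax * B₂)^2 := by
      rw [hexp]
      calc (∑ a : A, p a * (Q x a * (g a - s))) ^ 2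
          ≤ (∑ a : A, p a * (Q x a)^2) * (∑ a : A, p a * (g a - s)^2) := hCS
        _ ≤ Qmax^2 * B₂^2 := by
            apply mul_le_mul hQsum hvar' (Finset.sum_nonneg (fun a _ =>
              mul_nonneg (hppos a) (sq_nonneg _))) (sq_nonneg _)
        _ = (Qmax * B₂)^2 := by ring
    have hfn : 0 ≤ ‖f‖ := norm_nonneg _
    rw [key] at hfn ⊢
    nlinarith [hfinal, mul_nonneg hQ0 hB0]

lemma discountedDist_zero (ρ : Measure X) [IsProbabilityMeasure ρ] (P : Kernel X X) :
    discountedDist 0 ρ P = ρ := by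
  rw [discountedDist]
  ext s hs
  rw [Measure.smul_apply, Measure.sum_apply _ hs]
  rw [tsum_eq_single 0 (fun k hk => ?_)]
  · simp only [pow_zero, one_smul, smul_eq_mul, tsub_zero]
    have : ρ.bind (fun x => kernelPow P 0 x) = ρ := by
      simp only [kernelPow, Kernel.id_apply]
      exact Measure.bind_dirac
    rw [this]
  · rcases Nat.exists_eq_succ_of_ne_zero hk with ⟨m, rfl⟩
    simp [pow_succ]

lemma repr_lemma {d : ℕ} (γ : ℝ≥0) (hγ0 : 0 < γ) (hγ1 : γ < 1) (ρ : Measure X)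
    [IsProbabilityMeasure ρ] (P : Kernel X X) [IsMarkovKernel P]
    {f : X → EuclideanSpace ℝ (Fin d)} (hf : Integrable f (discountedDist γ ρ P)) :
    (∀ k, Integrable f (ρ.bind (fun x => kernelPow P k x))) ∧
      (1 - (γ : ℝ))⁻¹ • ∫ x, f x ∂(discountedDist γ ρ P) =
        ∑' k : ℕ, (γ : ℝ)^k • ∫ x, f x ∂(ρ.bind (fun x => kernelPow P k x)) := by
  set b : ℕ → Measure X := fun k => ρ.bind (fun x => kernelPow P k x) with hb
  set Msum : Measure X := Measure.sum (fun k : ℕ => (γ ^ k : ℝ≥0) • b k) with hMsum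
  set c : ℝ≥0 := (1 : ℝ≥0) - γ with hcdef
  have hc0 : c ≠ 0 := by
    rw [hcdef]
    exact ne_of_gt (tsub_pos_of_lt hγ1)
  have hη : discountedDist γ ρ P = ((c : ℝ≥0∞)) • Msum := rfl
  have hfM : Integrable f Msum := by
    rw [hη] at hf
    exact (integrable_smul_measure (by exact_mod_cast hc0) (by simp)).1 hf
  have hint : ∀ k, Integrable f (b k) := by
    intro k
    set dk : ℝ≥0∞ := (c : ℝ≥0∞) * ((γ : ℝ≥0∞))^k with hdk
    have hdk0 : dk ≠ 0 := by
      rw [hdk]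
      apply mul_ne_zero (by exact_mod_cast hc0)
      exact pow_ne_zero _ (by exact_mod_cast hγ0.ne')
    have hdkt : dk ≠ ∞ := by
      rw [hdk]
      exact ENNReal.mul_ne_top ENNReal.coe_ne_top (ENNReal.pow_ne_top ENNReal.coe_ne_top)
    have hle : b k ≤ dk⁻¹ • discountedDist γ ρ P := by
      refine Measure.le_iff.2 (fun s hs => ?_)
      rw [hη, Measure.smul_apply, Measure.smul_apply, smul_eq_mul, smul_eq_mul]
      calc (b k) s = dk⁻¹ * (dk * (b k) s) := by
            rw [← mul_assoc, ENNReal.inv_mul_cancel hdk0 hdkt, one_mul]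
        _ ≤ dk⁻¹ * ((c : ℝ≥0∞) * Msum s) := by
            apply mul_le_mul_right
            rw [hdk, mul_assoc]
            apply mul_le_mul_right
            calc ((γ : ℝ≥0∞))^k * (b k) s = (((γ^k : ℝ≥0)) : ℝ≥0∞) * (b k) s := by
                  push_cast; ring
              _ ≤ Msum s := by
                  rw [hMsum, Measure.sum_apply _ hs]
                  have := ENNReal.le_tsum
                    (f := fun j => ((γ^j : ℝ≥0) • b j : Measure X) s) k
                  simpa [Measure.smul_apply, smul_eq_mul] using this
    refine Integrable.mono_measure ?_ hle
    exact hf.smul_measure (by simp [ENNReal.inv_ne_top, hdk0])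
  refine ⟨hint, ?_⟩
  have hcr : (c : ℝ) = 1 - (γ : ℝ) := by
    rw [hcdef, NNReal.coe_sub hγ1.le, NNReal.coe_one]
  have h1 : ∫ x, f x ∂(discountedDist γ ρ P) = (1 - (γ : ℝ)) • ∫ x, f x ∂Msum := by
    rw [hη, integral_smul_measure, ENNReal.coe_toReal, hcr]
  have h2 : ∫ x, f x ∂Msum = ∑' k : ℕ, (γ : ℝ)^k • ∫ x, f x ∂(b k) := by
    rw [hMsum, integral_sum_measure hfM]
    refine tsum_congr (fun k => ?_)
    have : ((γ ^ k : ℝ≥0) • b k : Measure X) = (((γ ^ k : ℝ≥0) : ℝ≥0∞)) • b k := rfl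
    rw [this, integral_smul_measure, ENNReal.coe_toReal, NNReal.coe_pow]
  rw [h1, h2, smul_smul, inv_mul_cancel₀ (by rw [← hcr]; exact_mod_cast hc0), one_smul]


end AuxPG

/-- **Policy gradient error bound (Theorem: PolicyGradientError, sup-norm case).**
The ℓ₂ error between the policy gradient computed under the true discounted
future-state distribution and under the model-induced one is bounded by
`γ/(1−γ)² · Q_max · B₂ · sup_x ‖P^{π_θ}(·|x) − P̂^{π_θ}(·|x)‖_TV`. -/
theorem policy_gradient_error_bound
    {X A : Type*} [MeasurableSpace X] [Fintype A] [Nonempty A] {d : ℕ}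
    (γ : ℝ≥0) (hγ : γ < 1) (ρ : Measure X) [IsProbabilityMeasure ρ]
    (Pπ Phatπ : Kernel X X) [IsMarkovKernel Pπ] [IsMarkovKernel Phatπ]
    (φ : X → A → EuclideanSpace ℝ (Fin d)) (θ : EuclideanSpace ℝ (Fin d))
    (B₂ : ℝ) (hB : ∀ x a, ‖φ x a‖ ≤ B₂)
    (Q : X → A → ℝ) (Qmax : ℝ) (hQ : ∀ x a, |Q x a| ≤ Qmax)
    (hf₁ : Integrable (pgIntegrand φ θ Q) (discountedDist γ ρ Pπ))
    (hf₂ : Integrable (pgIntegrand φ θ Q) (discountedDist γ ρ Phatπ))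
    (ε : ℝ) (hε : ∀ x, tvDist (Pπ x) (Phatπ x) ≤ ε) :
    ‖(1 - (γ : ℝ))⁻¹ • ∫ x, pgIntegrand φ θ Q x ∂(discountedDist γ ρ Pπ) -
        (1 - (γ : ℝ))⁻¹ • ∫ x, pgIntegrand φ θ Q x ∂(discountedDist γ ρ Phatπ)‖ ≤
      (γ : ℝ) / (1 - (γ : ℝ)) ^ 2 * Qmax * B₂ * ε := by
  rcases (zero_le : (0 : ℝ≥0) ≤ γ).eq_or_lt with hγ0 | hγpos
  · subst hγ0
    rw [discountedDist_zero ρ Pπ, discountedDist_zero ρ Phatπ]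
    simp
  · haveI : Nonempty X := nonempty_of_prob ρ
    set x0 : X := Classical.arbitrary X with hx0
    have hM0 : 0 ≤ Qmax * B₂ :=
      mul_nonneg (le_trans (abs_nonneg _) (hQ x0 (Classical.arbitrary A)))
        (le_trans (norm_nonneg _) (hB x0 (Classical.arbitrary A)))
    have hfb : ∀ x, ‖pgIntegrand φ θ Q x‖ ≤ Qmax * B₂ := pg_norm_le φ θ Q hB hQ
    have hε0 : 0 ≤ ε := le_trans (tv_nonneg _ _) (hε x0)
    have hγR0 : (0 : ℝ) < (γ : ℝ) := by exact_mod_cast hγpos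
    have hγR1 : (γ : ℝ) < 1 := by exact_mod_cast hγ
    obtain ⟨hint1, hrep1⟩ := repr_lemma γ hγpos hγ ρ Pπ hf₁
    obtain ⟨hint2, hrep2⟩ := repr_lemma γ hγpos hγ ρ Phatπ hf₂
    rw [hrep1, hrep2]
    set J₁ : ℕ → EuclideanSpace ℝ (Fin d) := fun k =>
      ∫ x, pgIntegrand φ θ Q x ∂(ρ.bind (fun x => kernelPow Pπ k x)) with hJ₁
    set J₂ : ℕ → EuclideanSpace ℝ (Fin d) := fun k =>
      ∫ x, pgIntegrand φ θ Q x ∂(ρ.bind (fun x => kernelPow Phatπ k x)) with hJ₂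
    have hJb : ∀ (P : Kernel X X) [IsMarkovKernel P] (k : ℕ),
        ‖∫ x, pgIntegrand φ θ Q x ∂(ρ.bind (fun x => kernelPow P k x))‖ ≤ Qmax * B₂ := by
      intro P _ k
      haveI := kernelPow_markov P k
      haveI := bind_kernel_prob ρ (kernelPow P k)
      calc ‖∫ x, pgIntegrand φ θ Q x ∂(ρ.bind (fun x => kernelPow P k x))‖
          ≤ (Qmax * B₂) * ((ρ.bind (fun x => kernelPow P k x)) Set.univ).toReal :=
            norm_integral_le_of_norm_le_const (Filter.Eventually.of_forall hfb)
        _ = Qmax * B₂ := by rw [measure_univ]; simp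
    have hs₁ : Summable (fun k => (γ : ℝ)^k • J₁ k) := by
      refine Summable.of_norm_bounded
        ((summable_geometric_of_lt_one hγR0.le hγR1).mul_right (Qmax * B₂)) (fun k => ?_)
      rw [norm_smul, norm_pow, Real.norm_eq_abs, abs_of_nonneg hγR0.le]
      exact mul_le_mul_of_nonneg_left (hJb Pπ k) (pow_nonneg hγR0.le _)
    have hs₂ : Summable (fun k => (γ : ℝ)^k • J₂ k) := by
      refine Summable.of_norm_bounded
        ((summable_geometric_of_lt_one hγR0.le hγR1).mul_right (Qmax * B₂)) (fun k => ?_)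
      rw [norm_smul, norm_pow, Real.norm_eq_abs, abs_of_nonneg hγR0.le]
      exact mul_le_mul_of_nonneg_left (hJb Phatπ k) (pow_nonneg hγR0.le _)
    rw [← Summable.tsum_sub hs₁ hs₂]
    have hterm : ∀ k : ℕ, ‖(γ : ℝ)^k • J₁ k - (γ : ℝ)^k • J₂ k‖ ≤
        (Qmax * B₂ * ε) * ((k : ℝ) * (γ : ℝ)^k) := by
      intro k
      haveI := kernelPow_markov Pπ k
      haveI := kernelPow_markov Phatπ k
      haveI := bind_kernel_prob ρ (kernelPow Pπ k)
      haveI := bind_kernel_prob ρ (kernelPow Phatπ k)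
      rw [← smul_sub, norm_smul, norm_pow, Real.norm_eq_abs, abs_of_nonneg hγR0.le]
      have h1 := norm_integral_sub_le_tv (ρ.bind (fun x => kernelPow Pπ k x))
        (ρ.bind (fun x => kernelPow Phatπ k x)) (hint1 k) (hint2 k) hM0 hfb
      have h2 := tv_pow_le ρ Pπ Phatπ hε k
      calc (γ : ℝ)^k * ‖J₁ k - J₂ k‖
          ≤ (γ : ℝ)^k * ((Qmax * B₂) * ((k : ℝ) * ε)) := by
            refine mul_le_mul_of_nonneg_left (le_trans h1 ?_) (pow_nonneg hγR0.le _)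
            exact mul_le_mul_of_nonneg_left h2 hM0
        _ = (Qmax * B₂ * ε) * ((k : ℝ) * (γ : ℝ)^k) := by ring
    have hmaj : Summable (fun k : ℕ => (Qmax * B₂ * ε) * ((k : ℝ) * (γ : ℝ)^k)) := by
      apply Summable.mul_left
      have := summable_pow_mul_geometric_of_norm_lt_one 1
        (r := (γ : ℝ)) (by rw [Real.norm_eq_abs, abs_of_nonneg hγR0.le]; exact hγR1)
      simpa [pow_one] using this
    have hnorms : Summable (fun k => ‖(γ : ℝ)^k • J₁ k - (γ : ℝ)^k • J₂ k‖) :=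
      Summable.of_nonneg_of_le (fun k => norm_nonneg _) hterm hmaj
    calc ‖∑' k : ℕ, ((γ : ℝ)^k • J₁ k - (γ : ℝ)^k • J₂ k)‖
        ≤ ∑' k : ℕ, ‖(γ : ℝ)^k • J₁ k - (γ : ℝ)^k • J₂ k‖ := norm_tsum_le_tsum_norm hnorms
      _ ≤ ∑' k : ℕ, (Qmax * B₂ * ε) * ((k : ℝ) * (γ : ℝ)^k) := Summable.tsum_le_tsum hterm hnorms hmaj
      _ = (Qmax * B₂ * ε) * ((γ : ℝ) / (1 - (γ : ℝ))^2) := by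
          rw [tsum_mul_left, tsum_coe_mul_geometric_of_norm_lt_one
            (by rw [Real.norm_eq_abs, abs_of_nonneg hγR0.le]; exact hγR1)]
      _ = (γ : ℝ) / (1 - (γ : ℝ)) ^ 2 * Qmax * B₂ * ε := by ring
end
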